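/- Let V be a finite-dimensional complex vector space, W ⊆ GL(V) a finite subgroup generated by pseudo-reflections, and φ ∈ GL(V) an element of finite order normalizing W. Let n ≥ 1, let W^n act on V^n componentwise, and let σ ∈ GL(V^n) be defined by σ(x₁, …, xₙ) = (x₂, …, xₙ, φ(x₁)). Then for every ζ ∈ ℂ: (1) the ζ-rank of the coset W^n·σ equals the ζⁿ-rank of the coset W·φ, i.e. the maximum over g ∈ W^n·σ of dim ker(g − ζ·id) equals the maximum over h ∈ W·φ of dim ker(h − ζⁿ·id); (2) ζ is regular for W^n·σ if and only if ζⁿ is regular for W·φ, where a scalar ξ is regular for a coset if some element of the coset has a ξ-eigenvector lying outside the fixed hyperplanes ker(r − id) of all pseudo-reflections r of the relevant reflection group (W^n, respectively W). -/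

import Mathlib

/-- A pseudo-reflection: an automorphism `≠ 1` whose fixed subspace is a hyperplane. -/
def IsPseudoReflection {K V : Type*} [Field K] [AddCommGroup V] [Module K V]
    (g : V ≃ₗ[K] V) : Prop :=
  g ≠ 1 ∧
    Module.finrank K (LinearMap.ker ((g : V →ₗ[K] V) - LinearMap.id)) + 1 =
      Module.finrank K V

/-- The `ζ`-rank of a set of automorphisms: the maximal dimension of a `ζ`-eigenspace of
an element of the set. -/
noncomputable def eigenRank {K V : Type*} [Field K] [AddCommGroup V] [Module K V]
    (S : Set (V ≃ₗ[K] V)) (ζ : K) : ℕ :=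
  sSup {k : ℕ | ∃ g ∈ S, k = Module.finrank K (Module.End.eigenspace (g : V →ₗ[K] V) ζ)}

/-- The twisted-shift automorphism `σ` of `Vⁿ`:
`σ (x₁, …, xₙ) = (x₂, …, xₙ, φ x₁)`. -/
noncomputable def twistShift {K V : Type*} [Field K] [AddCommGroup V] [Module K V]
    (n : ℕ) (φ : V ≃ₗ[K] V) : (Fin n → V) ≃ₗ[K] (Fin n → V) :=
  (LinearEquiv.piCongrRight
      (fun i : Fin n => if (i : ℕ) = 0 then φ else LinearEquiv.refl K V)).trans
    (LinearEquiv.funCongrLeft K V (finRotate n))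

section Aux

variable {V : Type*} [AddCommGroup V] [Module ℂ V]


/-- partial ordered products `w 0 * w 1 * ⋯ * w (k-1)` -/
noncomputable def Pprod {m : ℕ} (w : Fin (m+1) → (V ≃ₗ[ℂ] V)) : ℕ → (V ≃ₗ[ℂ] V)
  | 0 => 1
  | (k+1) => Pprod w k * (if h : k < m+1 then w ⟨k, h⟩ else 1)


lemma twistShift_apply_mid {m : ℕ} (φ : V ≃ₗ[ℂ] V) (x : Fin (m+1) → V)
    (i : Fin (m+1)) (h : (i : ℕ) < m) :
    twistShift (m+1) φ x i = x ⟨(i:ℕ)+1, by omega⟩ := by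
  have hne : i ≠ Fin.last m := by
    intro he; rw [he] at h; simp [Fin.last] at h
  have h1 : finRotate (m+1) i = ⟨(i:ℕ)+1, by omega⟩ := by
    rw [finRotate_succ_apply]
    apply Fin.ext
    rw [Fin.val_add_one]
    simp [hne]
  simp only [twistShift, LinearEquiv.trans_apply, LinearEquiv.funCongrLeft_apply,
    LinearMap.funLeft_apply, h1, LinearEquiv.piCongrRight_apply]
  rw [if_neg (by omega)]
  rfl

lemma twistShift_apply_last {m : ℕ} (φ : V ≃ₗ[ℂ] V) (x : Fin (m+1) → V) :
    twistShift (m+1) φ x (Fin.last m) = φ (x 0) := by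
  have h1 : finRotate (m+1) (Fin.last m) = 0 := by
    rw [finRotate_succ_apply, Fin.last_add_one]
  simp only [twistShift, LinearEquiv.trans_apply, LinearEquiv.funCongrLeft_apply,
    LinearMap.funLeft_apply, h1, LinearEquiv.piCongrRight_apply]
  norm_num

lemma eigen_iff {m : ℕ} (w : Fin (m+1) → (V ≃ₗ[ℂ] V)) (φ : V ≃ₗ[ℂ] V) (ζ : ℂ)
    (x : Fin (m+1) → V) :
    (LinearEquiv.piCongrRight w * twistShift (m+1) φ) x = ζ • x ↔
      ∀ i, w i (twistShift (m+1) φ x i) = ζ • x i := by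
  constructor
  · intro hx i
    have := congrFun hx i
    simpa using this
  · intro hx
    funext i
    simpa using hx i

lemma key1 {m : ℕ} {w : Fin (m+1) → (V ≃ₗ[ℂ] V)} {φ : V ≃ₗ[ℂ] V} {ζ : ℂ}
    {x : Fin (m+1) → V} (hx : ∀ i, w i (twistShift (m+1) φ x i) = ζ • x i) :
    ∀ k (hk : k < m+1), x ⟨k, hk⟩ = ζ^k • (Pprod w k).symm (x 0) := by
  intro k
  induction k with
  | zero =>
    intro hk
    simp only [Pprod, pow_zero, one_smul]
    rfl
  | succ k ih =>
    intro hk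
    have hk' : k < m + 1 := by omega
    have hkm : k < m := by omega
    have hx' := hx ⟨k, hk'⟩
    rw [twistShift_apply_mid φ x ⟨k, hk'⟩ hkm] at hx'
    -- hx' : w ⟨k,_⟩ (x ⟨k+1,_⟩) = ζ • x ⟨k,_⟩
    have : x ⟨k+1, hk⟩ = (w ⟨k, hk'⟩).symm (ζ • x ⟨k, hk'⟩) := by
      rw [← hx', LinearEquiv.symm_apply_apply]
    rw [this, ih hk']
    simp only [Pprod, dif_pos hk', map_smul]
    rw [← mul_smul, ← pow_succ']
    rfl

lemma key2 {m : ℕ} {w : Fin (m+1) → (V ≃ₗ[ℂ] V)} {φ : V ≃ₗ[ℂ] V} {ζ : ℂ}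
    {x : Fin (m+1) → V} (hx : ∀ i, w i (twistShift (m+1) φ x i) = ζ • x i) :
    (Pprod w (m+1) * φ) (x 0) = ζ^(m+1) • x 0 := by
  have hm : m < m + 1 := by omega
  have hx' := hx (Fin.last m)
  rw [twistShift_apply_last φ x] at hx'
  have hlast : (Fin.last m) = (⟨m, hm⟩ : Fin (m+1)) := rfl
  rw [hlast, key1 hx m hm] at hx'
  -- hx' : w ⟨m,_⟩ (φ (x 0)) = ζ • ζ^m • (Pprod w m).symm (x 0)
  have : (Pprod w m) (w ⟨m, hm⟩ (φ (x 0))) = (Pprod w m) (ζ • ζ^m • (Pprod w m).symm (x 0)) := by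
    rw [hx']
  simp only [map_smul, LinearEquiv.apply_symm_apply] at this
  calc (Pprod w (m+1) * φ) (x 0) = (Pprod w m) (w ⟨m, hm⟩ (φ (x 0))) := by
        simp only [Pprod, dif_pos hm]; rfl
    _ = ζ^(m+1) • x 0 := by rw [this, ← mul_smul, ← pow_succ']

lemma key3 {m : ℕ} {w : Fin (m+1) → (V ≃ₗ[ℂ] V)} {φ : V ≃ₗ[ℂ] V} {ζ : ℂ}
    {v : V} (hv : (Pprod w (m+1) * φ) v = ζ^(m+1) • v) :
    ∀ i, w i (twistShift (m+1) φ (fun j => ζ^(j:ℕ) • (Pprod w (j:ℕ)).symm v) i)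
      = ζ • (ζ^(i:ℕ) • (Pprod w (i:ℕ)).symm v) := by
  intro i
  rcases lt_or_eq_of_le (Nat.lt_succ_iff.mp i.2) with him | him
  · rw [twistShift_apply_mid φ _ i him]
    have hi' : (i:ℕ) < m + 1 := i.2
    simp only [Pprod, dif_pos hi', Fin.eta]
    rw [map_smul]
    have : (Pprod w (i:ℕ) * w i).symm v = (w i).symm ((Pprod w (i:ℕ)).symm v) := rfl
    rw [this, LinearEquiv.apply_symm_apply, ← mul_smul, ← pow_succ']
  · have hlast : i = Fin.last m := Fin.ext him
    rw [hlast, twistShift_apply_last φ _]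
    have h0 : ((0 : Fin (m+1)) : ℕ) = 0 := rfl
    simp only [h0, pow_zero, one_smul]
    have hP0 : (Pprod w 0).symm v = v := rfl
    rw [hP0]
    have hm : m < m + 1 := by omega
    have hv' : (Pprod w m) (w ⟨m, hm⟩ (φ v)) = ζ^(m+1) • v := by
      rw [← hv]; simp only [Pprod, dif_pos hm]; rfl
    have : w ⟨m, hm⟩ (φ v) = (Pprod w m).symm (ζ^(m+1) • v) := by
      rw [← hv', LinearEquiv.symm_apply_apply]
    have hwi : w (Fin.last m) = w ⟨m, hm⟩ := rfl
    rw [hwi, this, map_smul]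
    simp only [Fin.val_last]
    rw [← mul_smul, ← pow_succ']

open Module

/-- The eigenspace correspondence as a linear equivalence. -/
noncomputable def eigenEquiv {m : ℕ} (w : Fin (m+1) → (V ≃ₗ[ℂ] V)) (φ : V ≃ₗ[ℂ] V) (ζ : ℂ) :
    Module.End.eigenspace ((LinearEquiv.piCongrRight w * twistShift (m+1) φ :
        (Fin (m+1) → V) ≃ₗ[ℂ] (Fin (m+1) → V)) : (Fin (m+1) → V) →ₗ[ℂ] (Fin (m+1) → V)) ζ
      ≃ₗ[ℂ]
    Module.End.eigenspace ((Pprod w (m+1) * φ : V ≃ₗ[ℂ] V) : V →ₗ[ℂ] V) (ζ^(m+1)) where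
  toFun x := ⟨x.1 0, by
    rw [Module.End.mem_eigenspace_iff]
    have hx : ∀ i, w i (twistShift (m+1) φ x.1 i) = ζ • x.1 i :=
      (eigen_iff w φ ζ x.1).mp (by
        have := x.2; rw [Module.End.mem_eigenspace_iff] at this; exact this)
    exact key2 hx⟩
  map_add' x y := rfl
  map_smul' c x := rfl
  invFun v := ⟨fun i => ζ^(i:ℕ) • (Pprod w (i:ℕ)).symm v.1, by
    rw [Module.End.mem_eigenspace_iff]
    have hv : (Pprod w (m+1) * φ) v.1 = ζ^(m+1) • v.1 := by
      have := v.2; rw [Module.End.mem_eigenspace_iff] at this; exact this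
    exact (eigen_iff w φ ζ _).mpr (key3 hv)⟩
  left_inv x := by
    apply Subtype.ext
    funext i
    have hx : ∀ i, w i (twistShift (m+1) φ x.1 i) = ζ • x.1 i :=
      (eigen_iff w φ ζ x.1).mp (by
        have := x.2; rw [Module.End.mem_eigenspace_iff] at this; exact this)
    have := key1 hx i.1 i.2
    simpa [Fin.eta] using this.symm
  right_inv v := by
    apply Subtype.ext
    show ζ^((0 : Fin (m+1)):ℕ) • (Pprod w ((0 : Fin (m+1)):ℕ)).symm v.1 = v.1
    norm_num
    rfl

lemma finrank_eigen_eq {m : ℕ} [FiniteDimensional ℂ V]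
    (w : Fin (m+1) → (V ≃ₗ[ℂ] V)) (φ : V ≃ₗ[ℂ] V) (ζ : ℂ) :
    finrank ℂ (Module.End.eigenspace ((LinearEquiv.piCongrRight w * twistShift (m+1) φ :
        (Fin (m+1) → V) ≃ₗ[ℂ] (Fin (m+1) → V)) : (Fin (m+1) → V) →ₗ[ℂ] (Fin (m+1) → V)) ζ)
      = finrank ℂ (Module.End.eigenspace ((Pprod w (m+1) * φ : V ≃ₗ[ℂ] V) : V →ₗ[ℂ] V)
          (ζ^(m+1))) :=
  (eigenEquiv w φ ζ).finrank_eq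

lemma Pprod_mem {m : ℕ} {W : Subgroup (V ≃ₗ[ℂ] V)} {w : Fin (m+1) → (V ≃ₗ[ℂ] V)}
    (hw : ∀ i, w i ∈ W) : ∀ k, Pprod w k ∈ W := by
  intro k
  induction k with
  | zero => exact one_mem W
  | succ k ih =>
    show Pprod w k * _ ∈ W
    refine mul_mem ih ?_
    split
    · exact hw _
    · exact one_mem W

lemma Pprod_special {m : ℕ} (u : V ≃ₗ[ℂ] V) :
    ∀ k, 1 ≤ k → Pprod (fun i : Fin (m+1) => if (i:ℕ) = 0 then u else 1) k = u := by
  intro k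
  induction k with
  | zero => omega
  | succ k ih =>
    intro _
    rcases Nat.eq_zero_or_pos k with hk | hk
    · subst hk
      show Pprod _ 0 * _ = u
      have h0 : (0:ℕ) < m + 1 := by omega
      rw [dif_pos h0]
      show 1 * (if ((⟨0,h0⟩ : Fin (m+1)):ℕ) = 0 then u else 1) = u
      simp
    · show Pprod _ k * _ = u
      rw [ih hk]
      split
      · rename_i h
        show u * (if ((⟨k, h⟩ : Fin (m+1)):ℕ) = 0 then u else 1) = u
        have hv : ((⟨k, h⟩ : Fin (m+1)):ℕ) = k := rfl
        rw [hv, if_neg (by omega)]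
        simp
      · simp


section PiSub

variable {n : ℕ}

/-- `Submodule.pi Set.univ p` is linearly equivalent to the product of the `p i`. -/
noncomputable def piSubEquiv (p : Fin n → Submodule ℂ V) :
    (Submodule.pi Set.univ p) ≃ₗ[ℂ] ((i : Fin n) → p i) where
  toFun x i := ⟨x.1 i, x.2 i trivial⟩
  map_add' x y := rfl
  map_smul' c x := rfl
  invFun y := ⟨fun i => (y i : V), fun i _ => (y i).2⟩
  left_inv x := rfl
  right_inv y := rfl

lemma finrank_pi_submodule [FiniteDimensional ℂ V] (p : Fin n → Submodule ℂ V) :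
    finrank ℂ (Submodule.pi Set.univ p) = ∑ i, finrank ℂ (p i) := by
  rw [(piSubEquiv p).finrank_eq, Module.finrank_pi_fintype]

lemma ker_piCongrRight_sub_id (w : Fin n → (V ≃ₗ[ℂ] V)) :
    LinearMap.ker (((LinearEquiv.piCongrRight w : (Fin n → V) ≃ₗ[ℂ] (Fin n → V)) :
        (Fin n → V) →ₗ[ℂ] (Fin n → V)) - LinearMap.id)
      = Submodule.pi Set.univ (fun i => LinearMap.ker ((w i : V →ₗ[ℂ] V) - LinearMap.id)) := by
  ext x
  simp only [LinearMap.mem_ker, Submodule.mem_pi, Set.mem_univ, forall_true_left,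
    LinearMap.sub_apply, LinearMap.id_apply, LinearEquiv.coe_coe,
    LinearEquiv.piCongrRight_apply]
  constructor
  · intro h i
    exact congrFun h i
  · intro h
    funext i
    exact h i

lemma ker_one_sub_id : LinearMap.ker ((((1 : V ≃ₗ[ℂ] V)) : V →ₗ[ℂ] V) - LinearMap.id)
    = (⊤ : Submodule ℂ V) := by
  ext x
  simp only [LinearMap.mem_ker, LinearMap.sub_apply, LinearMap.id_apply, Submodule.mem_top,
    iff_true, LinearEquiv.coe_coe]
  show (1 : V ≃ₗ[ℂ] V) x - x = 0
  simp

end PiSub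

section Refl

variable [FiniteDimensional ℂ V]

lemma exists_ne_of_ne_one {g : V ≃ₗ[ℂ] V} (hg : g ≠ 1) : ∃ v : V, g v ≠ v := by
  by_contra h
  push_neg at h
  exact hg (by ext v; simpa using h v)

lemma isPseudoReflection_conj {u g : V ≃ₗ[ℂ] V} (hg : IsPseudoReflection g) :
    IsPseudoReflection (u * g * u⁻¹) := by
  constructor
  · intro h
    apply hg.1
    have : g = u⁻¹ * (u * g * u⁻¹) * u := by group
    rw [h] at this
    simpa using this
  · have hker : LinearMap.ker (((u * g * u⁻¹ : V ≃ₗ[ℂ] V) : V →ₗ[ℂ] V) - LinearMap.id)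
        = Submodule.map (u : V →ₗ[ℂ] V) (LinearMap.ker ((g : V →ₗ[ℂ] V) - LinearMap.id)) := by
      ext x
      rw [Submodule.mem_map]
      simp only [LinearMap.mem_ker, LinearMap.sub_apply, LinearMap.id_apply,
        LinearEquiv.coe_coe, sub_eq_zero]
      constructor
      · intro h
        refine ⟨u.symm x, ?_, by simp⟩
        show g (u.symm x) = u.symm x
        have h1 : u (g (u⁻¹ x)) = x := h
        have h2 := congrArg u.symm h1
        rw [LinearEquiv.symm_apply_apply] at h2
        exact h2
      · rintro ⟨y, hy, rfl⟩
        show (u * g * u⁻¹) (u y) = u y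
        show u (g (u⁻¹ (u y))) = u y
        have : u⁻¹ (u y) = y := u.symm_apply_apply y
        rw [this, hy]
    rw [hker, LinearEquiv.finrank_map_eq]
    exact hg.2

lemma pseudoReflection_pi_single {n : ℕ} (hn : 0 < n) {r : V ≃ₗ[ℂ] V}
    (hr : IsPseudoReflection r) (j : Fin n) :
    IsPseudoReflection (LinearEquiv.piCongrRight
      (fun i : Fin n => if i = j then r else 1) : (Fin n → V) ≃ₗ[ℂ] (Fin n → V)) := by
  constructor
  · intro h
    obtain ⟨v, hv⟩ := exists_ne_of_ne_one hr.1
    have := congrFun (congrArg (fun e => (e : (Fin n → V) ≃ₗ[ℂ] (Fin n → V)) (fun _ => v)) h) j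
    simp only [LinearEquiv.piCongrRight_apply, if_pos rfl] at this
    exact hv (by simpa using this)
  · rw [ker_piCongrRight_sub_id, finrank_pi_submodule]
    have hfr : ∀ i : Fin n, finrank ℂ (LinearMap.ker
        (((if i = j then r else 1 : V ≃ₗ[ℂ] V) : V →ₗ[ℂ] V) - LinearMap.id))
        = if i = j then finrank ℂ (LinearMap.ker ((r : V →ₗ[ℂ] V) - LinearMap.id))
          else finrank ℂ V := by
      intro i
      by_cases hij : i = j
      · rw [if_pos hij, if_pos hij]
      · rw [if_neg hij, if_neg hij, ker_one_sub_id, finrank_top]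
    rw [Finset.sum_congr rfl (fun i _ => hfr i)]
    have hd : finrank ℂ (LinearMap.ker ((r : V →ₗ[ℂ] V) - LinearMap.id)) + 1 = finrank ℂ V :=
      hr.2
    have hpi : finrank ℂ (Fin n → V) = n * finrank ℂ V := by
      rw [Module.finrank_pi_fintype]
      simp [Finset.sum_const, mul_comm]
    set c := finrank ℂ (LinearMap.ker ((r : V →ₗ[ℂ] V) - LinearMap.id)) with hc
    set d := finrank ℂ V with hdd
    have hsum : (∑ i : Fin n, if i = j then c else d) = c + (n-1) * d := by
      rw [← Finset.add_sum_erase _ _ (Finset.mem_univ j), if_pos rfl]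
      congr 1
      rw [Finset.sum_congr rfl (fun i hi => if_neg (Finset.ne_of_mem_erase hi)),
        Finset.sum_const, Finset.card_erase_of_mem (Finset.mem_univ j), Finset.card_univ,
        Fintype.card_fin, smul_eq_mul]
    rw [hsum, hpi]
    obtain ⟨n', rfl⟩ : ∃ n', n = n'+1 := ⟨n-1, by omega⟩
    simp only [Nat.add_sub_cancel]
    rw [← hd]
    ring

end Refl

lemma pseudoReflection_pi_extract [FiniteDimensional ℂ V] {n : ℕ} {w : Fin n → (V ≃ₗ[ℂ] V)}
    (hR : IsPseudoReflection (LinearEquiv.piCongrRight w :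
      (Fin n → V) ≃ₗ[ℂ] (Fin n → V))) :
    ∃ j, IsPseudoReflection (w j) := by
  have h2 := hR.2
  rw [ker_piCongrRight_sub_id, finrank_pi_submodule] at h2
  rw [Module.finrank_pi_fintype] at h2
  set d := finrank ℂ V with hdd
  set f := fun i : Fin n =>
    finrank ℂ (LinearMap.ker ((w i : V →ₗ[ℂ] V) - LinearMap.id)) with hf
  have hle : ∀ i, f i ≤ d := fun i => Submodule.finrank_le _
  have hsumd : ∑ _i : Fin n, d = n * d := by
    rw [Finset.sum_const, Finset.card_univ, Fintype.card_fin, smul_eq_mul]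
  -- h2 : ∑ f + 1 = ∑ d = n * d
  have h2' : (∑ i, f i) + 1 = ∑ _i : Fin n, d := h2
  have hdef : ∑ i, (d - f i) = 1 := by
    have hpair : ∑ i, (d - f i) + ∑ i, f i = ∑ _i : Fin n, d := by
      rw [← Finset.sum_add_distrib]
      exact Finset.sum_congr rfl (fun i _ => by have := hle i; omega)
    omega
  have hex : ∃ j, d - f j ≠ 0 := by
    by_contra hco
    push_neg at hco
    rw [Finset.sum_congr rfl (fun i _ => hco i)] at hdef
    simp at hdef
  obtain ⟨j, hj⟩ := hex
  have hle1 : (d - f j) ≤ ∑ i, (d - f i) :=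
    Finset.single_le_sum (f := fun i => d - f i) (fun i _ => Nat.zero_le _) (Finset.mem_univ j)
  have hwj1 : w j ≠ 1 := by
    intro hwj
    have hfj : f j = d := by
      rw [hf]
      show finrank ℂ (LinearMap.ker ((w j : V →ₗ[ℂ] V) - LinearMap.id)) = d
      rw [hwj, ker_one_sub_id, finrank_top]
    omega
  have hgoal : f j + 1 = d := by have := hle j; omega
  exact ⟨j, hwj1, hgoal⟩

end Aux

/-- Restriction of scalars for complex reflection cosets: the `ζ`-rank of the coset
`Wⁿ·σ` equals the `ζⁿ`-rank of `W·φ`, and `ζ` is regular for `Wⁿ·σ` iff `ζⁿ` is regular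
for `W·φ`. -/
theorem restriction_of_scalars_rank_and_regularity
    {V : Type*} [AddCommGroup V] [Module ℂ V] [FiniteDimensional ℂ V]
    (W : Subgroup (V ≃ₗ[ℂ] V)) (hWfin : (W : Set (V ≃ₗ[ℂ] V)).Finite)
    (hWrefl : Subgroup.closure {g : V ≃ₗ[ℂ] V | g ∈ W ∧ IsPseudoReflection g} = W)
    (φ : V ≃ₗ[ℂ] V) (hφord : IsOfFinOrder φ)
    (hφnorm : ∀ u ∈ W, φ * u * φ⁻¹ ∈ W)
    (n : ℕ) (hn : 1 ≤ n) (ζ : ℂ) :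
    eigenRank {g : (Fin n → V) ≃ₗ[ℂ] (Fin n → V) |
        ∃ w : Fin n → (V ≃ₗ[ℂ] V), (∀ i, w i ∈ W) ∧
          g = LinearEquiv.piCongrRight w * twistShift n φ} ζ =
      eigenRank {h : V ≃ₗ[ℂ] V | ∃ u ∈ W, h = u * φ} (ζ ^ n) ∧
    ((∃ g ∈ {g : (Fin n → V) ≃ₗ[ℂ] (Fin n → V) |
          ∃ w : Fin n → (V ≃ₗ[ℂ] V), (∀ i, w i ∈ W) ∧
            g = LinearEquiv.piCongrRight w * twistShift n φ},
        ∃ v : Fin n → V, v ≠ 0 ∧ g v = ζ • v ∧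
          ∀ r : (Fin n → V) ≃ₗ[ℂ] (Fin n → V),
            (∃ w : Fin n → (V ≃ₗ[ℂ] V), (∀ i, w i ∈ W) ∧
              r = LinearEquiv.piCongrRight w) →
            IsPseudoReflection r → r v ≠ v) ↔
      (∃ h ∈ {h : V ≃ₗ[ℂ] V | ∃ u ∈ W, h = u * φ},
        ∃ v : V, v ≠ 0 ∧ h v = ζ ^ n • v ∧
          ∀ r : V ≃ₗ[ℂ] V, r ∈ W → IsPseudoReflection r → r v ≠ v)) := by
  obtain ⟨m, rfl⟩ : ∃ m, n = m + 1 := ⟨n - 1, by omega⟩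
  constructor
  · -- rank statement
    unfold eigenRank
    congr 1
    ext k
    simp only [Set.mem_setOf_eq]
    constructor
    · rintro ⟨g, ⟨w, hwW, rfl⟩, rfl⟩
      exact ⟨Pprod w (m+1) * φ, ⟨Pprod w (m+1), Pprod_mem hwW (m+1), rfl⟩,
        finrank_eigen_eq w φ ζ⟩
    · rintro ⟨h, ⟨u, huW, rfl⟩, rfl⟩
      refine ⟨LinearEquiv.piCongrRight
          (fun i : Fin (m+1) => if (i:ℕ) = 0 then u else 1) * twistShift (m+1) φ,
        ⟨_, fun i => ?_, rfl⟩, ?_⟩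
      · split
        · exact huW
        · exact one_mem W
      · rw [finrank_eigen_eq, Pprod_special u (m+1) (by omega)]
  · -- regularity statement
    constructor
    · rintro ⟨g, ⟨w, hwW, rfl⟩, x, hx0, hxe, hreg⟩
      have hx : ∀ i, w i (twistShift (m+1) φ x i) = ζ • x i := (eigen_iff w φ ζ x).mp hxe
      refine ⟨Pprod w (m+1) * φ, ⟨_, Pprod_mem hwW (m+1), rfl⟩, x 0, ?_, key2 hx, ?_⟩
      · intro h0
        apply hx0
        funext i
        have hk := key1 hx i.1 i.2
        simpa [h0] using hk
      · intro r hrW hrRefl hrv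
        have hR := hreg (LinearEquiv.piCongrRight
            (fun i : Fin (m+1) => if i = 0 then r else 1))
          ⟨_, fun i => by
            split
            · exact hrW
            · exact one_mem W, rfl⟩
          (pseudoReflection_pi_single (by omega) hrRefl 0)
        apply hR
        funext i
        simp only [LinearEquiv.piCongrRight_apply]
        by_cases hi : i = 0
        · subst hi
          rw [if_pos rfl, hrv]
        · rw [if_neg hi]
          rfl
    · rintro ⟨h, ⟨u, huW, rfl⟩, v, hv0, hve, hreg⟩
      have hz : ζ ≠ 0 := by
        intro h0
        apply hv0
        rw [h0, zero_pow (by omega : m+1 ≠ 0), zero_smul] at hve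
        exact (u * φ).injective (by rw [hve, map_zero])
      set w : Fin (m+1) → (V ≃ₗ[ℂ] V) := fun i => if (i:ℕ) = 0 then u else 1 with hw
      have hwW : ∀ i, w i ∈ W := fun i => by
        rw [hw]
        dsimp only
        split
        · exact huW
        · exact one_mem W
      have hPu : Pprod w (m+1) = u := Pprod_special u (m+1) (by omega)
      have hvP : (Pprod w (m+1) * φ) v = ζ^(m+1) • v := by rw [hPu]; exact hve
      refine ⟨_, ⟨w, hwW, rfl⟩, fun i => ζ^(i:ℕ) • (Pprod w (i:ℕ)).symm v, ?_, ?_, ?_⟩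
      · intro h0
        apply hv0
        have h1 := congrFun h0 0
        simpa [Pprod] using h1
      · exact (eigen_iff w φ ζ _).mpr (key3 hvP)
      · rintro R ⟨w', hw'W, rfl⟩ hRrefl hfix
        obtain ⟨j, hj⟩ := pseudoReflection_pi_extract hRrefl
        have hcomp := congrFun hfix j
        rw [LinearEquiv.piCongrRight_apply] at hcomp
        have hz2 : (ζ:ℂ)^(j:ℕ) ≠ 0 := pow_ne_zero _ hz
        have hy : w' j ((Pprod w (j:ℕ)).symm v) = (Pprod w (j:ℕ)).symm v := by
          rw [map_smul] at hcomp
          exact smul_right_injective V hz2 hcomp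
        have hqW : Pprod w (j:ℕ) ∈ W := Pprod_mem hwW _
        have hconj : (Pprod w (j:ℕ) * w' j * (Pprod w (j:ℕ))⁻¹) v = v := by
          show Pprod w (j:ℕ) (w' j ((Pprod w (j:ℕ))⁻¹ v)) = v
          have hq2 : ((Pprod w (j:ℕ))⁻¹ : V ≃ₗ[ℂ] V) v = (Pprod w (j:ℕ)).symm v := rfl
          rw [hq2, hy, LinearEquiv.apply_symm_apply]
        exact hreg (Pprod w (j:ℕ) * w' j * (Pprod w (j:ℕ))⁻¹)
          (mul_mem (mul_mem hqW (hw'W j)) (inv_mem hqW))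
          (isPseudoReflection_conj hj) hconj
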